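/- Let K be a real number with 0 < K < 1 and let s be the unique positive real root of q_K(z) = z(z+1)² - 4K. Let A be the 4×4 real matrix with rows (a,b,c,d), (b,a,d,c), (c,d,a,b), (d,c,b,a) where a+b+c+d=1 (a Kimura 3-parameter matrix), and set α = 1 - 2(b+c), β = 1 - 2(b+d), γ = 1 - 2(c+d). Then A has all entries strictly positive and det(A) = K if and only if: s < |α| < 1, I_{|α|} < |β| < J_{|α|}, and γ = K/(αβ), where for y = |α|, I_y = max{ (-1 + y + √((1-y)² + 4K/y))/2, (1 + y - √((1+y)² - 4K/y))/2 } and J_y = min{ (1 + y + √((1+y)² - 4K/y))/2, (1 - y + √((1-y)² + 4K/y))/2 }. -/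

import Mathlib

private lemma mono_root (K s x : ℝ) (hK : 0 < K) (hs : 0 < s)
    (hseq : s * (s + 1) ^ 2 = 4 * K) (hx : 0 < x) :
    4 * K < x * (x + 1) ^ 2 ↔ s < x := by
  constructor
  · intro h
    by_contra hc
    push_neg at hc
    nlinarith [mul_nonneg (sub_nonneg.mpr hc)
      (by positivity : (0:ℝ) ≤ s^2 + s*x + x^2 + 2*s + 2*x + 1)]
  · intro h
    nlinarith [mul_pos (sub_pos.mpr h)
      (by positivity : (0:ℝ) < s^2 + s*x + x^2 + 2*s + 2*x + 1)]

private lemma quad_neg_iff (B C D y : ℝ) (hD : D = B ^ 2 - 4 * C) :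
    y ^ 2 - B * y + C < 0 ↔
      (0 < D ∧ (B - Real.sqrt D) / 2 < y ∧ y < (B + Real.sqrt D) / 2) := by
  have htn : 0 ≤ Real.sqrt D := Real.sqrt_nonneg D
  constructor
  · intro h
    have hD0 : 0 < D := by nlinarith [sq_nonneg (2*y - B)]
    have ht : Real.sqrt D ^ 2 = D := Real.sq_sqrt hD0.le
    refine ⟨hD0, ?_, ?_⟩
    · by_contra hc
      push_neg at hc
      nlinarith [ht, mul_nonneg (by linarith : (0:ℝ) ≤ B - 2*y - Real.sqrt D)
        (by linarith : (0:ℝ) ≤ B - 2*y + Real.sqrt D)]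
    · by_contra hc
      push_neg at hc
      nlinarith [ht, mul_nonneg (by linarith : (0:ℝ) ≤ 2*y - B - Real.sqrt D)
        (by linarith : (0:ℝ) ≤ 2*y - B + Real.sqrt D)]
  · rintro ⟨hD0, h1, h2⟩
    have ht : Real.sqrt D ^ 2 = D := Real.sq_sqrt hD0.le
    nlinarith [ht, mul_pos (by linarith : (0:ℝ) < Real.sqrt D - (2*y - B))
      (by linarith : (0:ℝ) < Real.sqrt D + (2*y - B))]

private lemma quad_pos_iff (B C D y : ℝ) (hC : 0 < C) (hy : 0 < y)
    (hD : D = B ^ 2 + 4 * C) :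
    0 < y ^ 2 + B * y - C ↔ (-B + Real.sqrt D) / 2 < y := by
  have hD0 : 0 < D := by nlinarith [sq_nonneg B]
  have ht : Real.sqrt D ^ 2 = D := Real.sq_sqrt hD0.le
  have htn : 0 ≤ Real.sqrt D := Real.sqrt_nonneg D
  constructor
  · intro h
    have h2yB : 0 < 2*y + B := by
      by_contra hcc
      push_neg at hcc
      nlinarith [mul_pos hy hy, mul_nonneg hy.le (show (0:ℝ) ≤ -B - 2*y by linarith)]
    by_contra hc
    push_neg at hc
    nlinarith [ht, mul_nonneg (by linarith : (0:ℝ) ≤ Real.sqrt D - (2*y + B))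
      (by linarith : (0:ℝ) ≤ Real.sqrt D + (2*y + B))]
  · intro h
    nlinarith [ht, mul_pos (by linarith : (0:ℝ) < 2*y + B - Real.sqrt D)
      (by linarith : (0:ℝ) < 2*y + B + Real.sqrt D)]

private lemma quad_neg_iff' (B C D y : ℝ) (hC : 0 < C) (hy : 0 < y)
    (hD : D = B ^ 2 + 4 * C) :
    y ^ 2 - B * y - C < 0 ↔ y < (B + Real.sqrt D) / 2 := by
  have hD0 : 0 < D := by nlinarith [sq_nonneg B]
  have ht : Real.sqrt D ^ 2 = D := Real.sq_sqrt hD0.le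
  have htn : 0 ≤ Real.sqrt D := Real.sqrt_nonneg D
  constructor
  · intro h
    rcases le_or_gt (2*y - B) 0 with h0 | h0
    · by_contra hc
      push_neg at hc
      nlinarith
    · by_contra hc
      push_neg at hc
      nlinarith [ht, mul_nonneg (by linarith : (0:ℝ) ≤ 2*y - B - Real.sqrt D)
        (by linarith : (0:ℝ) ≤ 2*y - B + Real.sqrt D)]
  · intro h
    rcases le_or_gt (2*y - B) 0 with h0 | h0
    · nlinarith [mul_pos hy hy, mul_nonneg hy.le (show (0:ℝ) ≤ B - 2*y by linarith)]
    · nlinarith [ht, mul_pos (by linarith : (0:ℝ) < Real.sqrt D - (2*y - B))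
        (by linarith : (0:ℝ) < Real.sqrt D + (2*y - B))]

private lemma sym_iff (K α β γ : ℝ) (hK : 0 < K) (hdet : α * β * γ = K) :
    (0 < 1 + α + β + γ ∧ 0 < 1 - α - β + γ ∧ 0 < 1 - α + β - γ ∧ 0 < 1 + α - β - γ) ↔
      (|β| + |γ| < 1 + |α| ∧ |(|β| - |γ|)| < 1 - |α|) := by
  have hα : α ≠ 0 := by
    intro h
    rw [h] at hdet
    simp at hdet
    linarith
  have hβ : β ≠ 0 := by
    intro h
    rw [h] at hdet
    simp at hdet
    linarith
  rcases hα.lt_or_gt with ha | ha <;> rcases hβ.lt_or_gt with hb | hb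
  · have hab : 0 < α * β := mul_pos_of_neg_of_neg ha hb
    have hg : 0 < γ := by
      by_contra h
      push_neg at h
      nlinarith [mul_nonneg hab.le (neg_nonneg.mpr h)]
    rw [abs_of_neg ha, abs_of_neg hb, abs_of_pos hg, abs_lt]
    constructor
    · rintro ⟨h1, h2, h3, h4⟩
      exact ⟨by linarith, by linarith, by linarith⟩
    · rintro ⟨h1, h2, h3⟩
      exact ⟨by linarith, by linarith, by linarith, by linarith⟩
  · have hab : α * β < 0 := mul_neg_of_neg_of_pos ha hb
    have hg : γ < 0 := by
      by_contra h
      push_neg at h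
      nlinarith [mul_nonpos_of_nonpos_of_nonneg hab.le h]
    rw [abs_of_neg ha, abs_of_pos hb, abs_of_neg hg, abs_lt]
    constructor
    · rintro ⟨h1, h2, h3, h4⟩
      exact ⟨by linarith, by linarith, by linarith⟩
    · rintro ⟨h1, h2, h3⟩
      exact ⟨by linarith, by linarith, by linarith, by linarith⟩
  · have hab : α * β < 0 := mul_neg_of_pos_of_neg ha hb
    have hg : γ < 0 := by
      by_contra h
      push_neg at h
      nlinarith [mul_nonpos_of_nonpos_of_nonneg hab.le h]
    rw [abs_of_pos ha, abs_of_neg hb, abs_of_neg hg, abs_lt]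
    constructor
    · rintro ⟨h1, h2, h3, h4⟩
      exact ⟨by linarith, by linarith, by linarith⟩
    · rintro ⟨h1, h2, h3⟩
      exact ⟨by linarith, by linarith, by linarith, by linarith⟩
  · have hab : 0 < α * β := mul_pos ha hb
    have hg : 0 < γ := by
      by_contra h
      push_neg at h
      nlinarith [mul_nonneg hab.le (neg_nonneg.mpr h)]
    rw [abs_of_pos ha, abs_of_pos hb, abs_of_pos hg, abs_lt]
    constructor
    · rintro ⟨h1, h2, h3, h4⟩
      exact ⟨by linarith, by linarith, by linarith⟩
    · rintro ⟨h1, h2, h3⟩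
      exact ⟨by linarith, by linarith, by linarith, by linarith⟩

private lemma analytic (K s x y : ℝ) (hK : 0 < K) (hs : 0 < s)
    (hseq : s * (s + 1) ^ 2 = 4 * K) (hx : 0 < x) (hy : 0 < y) :
    (y + K / (x * y) < 1 + x ∧ |y - K / (x * y)| < 1 - x) ↔
      (s < x ∧ x < 1 ∧
        max ((-1 + x + Real.sqrt ((1 - x) ^ 2 + 4 * K / x)) / 2)
            ((1 + x - Real.sqrt ((1 + x) ^ 2 - 4 * K / x)) / 2) < y ∧
        y < min ((1 + x + Real.sqrt ((1 + x) ^ 2 - 4 * K / x)) / 2)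
            ((1 - x + Real.sqrt ((1 - x) ^ 2 + 4 * K / x)) / 2)) := by
  have hz : 0 < K / (x * y) := by positivity
  have hCx : 0 < K / x := by positivity
  have key : K / (x * y) * y = K / x := by
    field_simp
  have e1 : (y + K / (x * y) < 1 + x) ↔ (y ^ 2 - (1 + x) * y + K / x < 0) := by
    rw [← mul_lt_mul_iff_of_pos_right hy, add_mul, key]
    constructor <;> intro h <;> nlinarith [h]
  have e2 : (y - K / (x * y) < 1 - x) ↔ (y ^ 2 - (1 - x) * y - K / x < 0) := by
    rw [← mul_lt_mul_iff_of_pos_right hy, sub_mul, key]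
    constructor <;> intro h <;> nlinarith [h]
  have e3 : (K / (x * y) - y < 1 - x) ↔ (0 < y ^ 2 + (1 - x) * y - K / x) := by
    rw [← mul_lt_mul_iff_of_pos_right hy, sub_mul, key]
    constructor <;> intro h <;> nlinarith [h]
  have q1 := quad_neg_iff (1 + x) (K / x) ((1 + x) ^ 2 - 4 * K / x) y (by ring)
  have q2 := quad_neg_iff' (1 - x) (K / x) ((1 - x) ^ 2 + 4 * K / x) y hCx hy (by ring)
  have q3 := quad_pos_iff (1 - x) (K / x) ((1 - x) ^ 2 + 4 * K / x) y hCx hy (by ring)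
  have hrw : (-(1 - x) + Real.sqrt ((1 - x) ^ 2 + 4 * K / x)) / 2
      = (-1 + x + Real.sqrt ((1 - x) ^ 2 + 4 * K / x)) / 2 := by ring
  rw [hrw] at q3
  have hd1 : (0 < (1 + x) ^ 2 - 4 * K / x) ↔ s < x := by
    rw [← mono_root K s x hK hs hseq hx, sub_pos, div_lt_iff₀ hx]
    constructor <;> intro h <;> nlinarith
  constructor
  · rintro ⟨h1, h2⟩
    have hx1 : x < 1 := by
      have := abs_nonneg (y - K / (x * y))
      linarith
    rw [abs_lt] at h2
    obtain ⟨h2a, h2b⟩ := h2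
    obtain ⟨hD0, hL2, hU1⟩ := q1.mp (e1.mp h1)
    have hU2 := q2.mp (e2.mp h2b)
    have hL1 := q3.mp (e3.mp (by linarith))
    exact ⟨hd1.mp hD0, hx1, max_lt hL1 hL2, lt_min hU1 hU2⟩
  · rintro ⟨hsx, hx1, hmax, hmin⟩
    rw [max_lt_iff] at hmax
    rw [lt_min_iff] at hmin
    have hD0 : 0 < (1 + x) ^ 2 - 4 * K / x := hd1.mpr hsx
    have c1 := q1.mpr ⟨hD0, hmax.2, hmin.1⟩
    have c2 := q2.mpr hmin.2
    have c3 := q3.mpr hmax.1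
    refine ⟨e1.mpr c1, ?_⟩
    rw [abs_lt]
    exact ⟨by linarith [e3.mpr c3], e2.mpr c2⟩

set_option maxHeartbeats 2000000 in
theorem stmt_10 (K : ℝ) (hK0 : 0 < K) (hK1 : K < 1) (s : ℝ)
    (hs : 0 < s ∧ s * (s + 1) ^ 2 - 4 * K = 0)
    (hsu : ∀ t : ℝ, 0 < t → t * (t + 1) ^ 2 - 4 * K = 0 → t = s)
    (a b c d : ℝ) (hsum : a + b + c + d = 1)
    (A : Matrix (Fin 4) (Fin 4) ℝ)
    (hA : A = !![a, b, c, d; b, a, d, c; c, d, a, b; d, c, b, a])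
    (α β γ : ℝ) (hα : α = 1 - 2 * (b + c)) (hβ : β = 1 - 2 * (b + d))
    (hγ : γ = 1 - 2 * (c + d)) :
    ((∀ i j, 0 < A i j) ∧ A.det = K) ↔
      (s < |α| ∧ |α| < 1 ∧
        max ((-1 + |α| + Real.sqrt ((1 - |α|) ^ 2 + 4 * K / |α|)) / 2)
            ((1 + |α| - Real.sqrt ((1 + |α|) ^ 2 - 4 * K / |α|)) / 2) < |β| ∧
        |β| < min ((1 + |α| + Real.sqrt ((1 + |α|) ^ 2 - 4 * K / |α|)) / 2)
            ((1 - |α| + Real.sqrt ((1 - |α|) ^ 2 + 4 * K / |α|)) / 2) ∧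
        γ = K / (α * β)) := by
  obtain ⟨hs0, hseq0⟩ := hs
  have hseq : s * (s + 1) ^ 2 = 4 * K := by linarith
  subst hA
  have hpos : (∀ i j, 0 < (!![a, b, c, d; b, a, d, c; c, d, a, b; d, c, b, a]) i j)
      ↔ (0 < a ∧ 0 < b ∧ 0 < c ∧ 0 < d) := by
    constructor
    · intro h
      exact ⟨by simpa using h 0 0, by simpa using h 0 1, by simpa using h 0 2,
        by simpa using h 0 3⟩
    · rintro ⟨ha, hb, hc, hd⟩ i j
      fin_cases i <;> fin_cases j <;>
        simp only [Matrix.cons_val', Matrix.cons_val_zero, Matrix.cons_val_one,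
          Matrix.head_cons, Matrix.head_fin_const, Matrix.cons_val_fin_one, Matrix.empty_val',
          Matrix.cons_val_two, Matrix.cons_val_three, Matrix.vecHead, Matrix.vecTail,
          Fin.isValue, Function.comp_apply, Fin.succ] <;>
        assumption
  have hdet2 : (!![a, b, c, d; b, a, d, c; c, d, a, b; d, c, b, a]).det = α * β * γ := by
    have hd : d = 1 - a - b - c := by linarith
    subst hd
    rw [hα, hβ, hγ]
    simp (config := { decide := true }) [Matrix.det_succ_row_zero, Fin.sum_univ_succ,
      Fin.succAbove, Fin.castSucc, Fin.castAdd, Fin.castLE]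
    ring
  rw [hpos, hdet2]
  have ha4 : 4 * a = 1 + α + β + γ := by linarith
  have hb4 : 4 * b = 1 - α - β + γ := by linarith
  have hc4 : 4 * c = 1 - α + β - γ := by linarith
  have hd4 : 4 * d = 1 + α - β - γ := by linarith
  constructor
  · rintro ⟨⟨hpa, hpb, hpc, hpd⟩, hprod⟩
    have hαne : α ≠ 0 := by
      intro h
      rw [h] at hprod
      simp at hprod
      linarith
    have hβne : β ≠ 0 := by
      intro h
      rw [h] at hprod
      simp at hprod
      linarith
    have hab : α * β ≠ 0 := mul_ne_zero hαne hβne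
    have hγeq : γ = K / (α * β) := by
      rw [eq_div_iff hab]
      linear_combination hprod
    have hxa : 0 < |α| := abs_pos.mpr hαne
    have hyb : 0 < |β| := abs_pos.mpr hβne
    have hzabs : |γ| = K / (|α| * |β|) := by
      rw [hγeq, abs_div, abs_mul, abs_of_pos hK0]
    have hsym := (sym_iff K α β γ hK0 hprod).mp
      ⟨by linarith, by linarith, by linarith, by linarith⟩
    rw [hzabs] at hsym
    obtain ⟨hs1, hx1, hmax, hmin⟩ :=
      (analytic K s |α| |β| hK0 hs0 hseq hxa hyb).mp hsym
    exact ⟨hs1, hx1, hmax, hmin, hγeq⟩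
  · rintro ⟨hs1, hx1, hmax, hmin, hγeq⟩
    have hxa : 0 < |α| := lt_trans hs0 hs1
    have h1x : (0:ℝ) ≤ 1 - |α| := by linarith
    have hE : (1 - |α|) ^ 2 < (1 - |α|) ^ 2 + 4 * K / |α| := by
      have : 0 < 4 * K / |α| := by positivity
      linarith
    have hsq : 1 - |α| < Real.sqrt ((1 - |α|) ^ 2 + 4 * K / |α|) := by
      exact (Real.lt_sqrt h1x).mpr hE
    have hL1pos : 0 < (-1 + |α| + Real.sqrt ((1 - |α|) ^ 2 + 4 * K / |α|)) / 2 := by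
      linarith
    have hyb : 0 < |β| := lt_trans (lt_of_lt_of_le hL1pos (le_max_left _ _)) hmax
    have hβne : β ≠ 0 := abs_pos.mp hyb
    have hαne : α ≠ 0 := abs_pos.mp hxa
    have hprod : α * β * γ = K := by
      rw [hγeq]
      field_simp
    have han := (analytic K s |α| |β| hK0 hs0 hseq hxa hyb).mpr ⟨hs1, hx1, hmax, hmin⟩
    have hzabs : |γ| = K / (|α| * |β|) := by
      rw [hγeq, abs_div, abs_mul, abs_of_pos hK0]
    rw [← hzabs] at han
    obtain ⟨t1, t2, t3, t4⟩ := (sym_iff K α β γ hK0 hprod).mpr han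
    exact ⟨⟨by linarith, by linarith, by linarith, by linarith⟩, hprod⟩
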